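/- If G is a connected graph and G' is obtained from G by adding one new vertex adjacent to at least one vertex of G, then rvc(G') ≤ rvc(G) + 1. -/

import Mathlib

open SimpleGraph

/-- A coloring `c` (using colors `< k`) makes `G` rainbow vertex-connected: every pair of
vertices is joined by a path whose internal vertices receive distinct colors (all `< k`). -/
def IsRainbowVCColoring {V : Type*} (G : SimpleGraph V) (c : V → ℕ) (k : ℕ) : Prop :=
  ∀ u v : V, ∃ p : G.Walk u v, p.IsPath ∧
    (p.support.tail.dropLast.map c).Nodup ∧
    ∀ x ∈ p.support.tail.dropLast, c x < k

/-- The rainbow vertex-connection number: the least number of colors making `G`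
rainbow vertex-connected. -/
noncomputable def rvc {V : Type*} (G : SimpleGraph V) : ℕ :=
  sInf {k | ∃ c : V → ℕ, IsRainbowVCColoring G c k}

/-- The graph obtained from `G` by adding one new vertex (`none`) joined to the
vertices in `S`. -/
def addVertex {V : Type*} (G : SimpleGraph V) (S : Set V) : SimpleGraph (Option V) :=
  SimpleGraph.fromRel (fun x y =>
    match x, y with
    | some a, some b => G.Adj a b
    | none, some a => a ∈ S
    | _, _ => False)

private lemma tail_dropLast_comm {α : Type*} (l : List α) :
    l.dropLast.tail = l.tail.dropLast := by
  cases l with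
  | nil => rfl
  | cons a t =>
    cases t with
    | nil => rfl
    | cons b t' => rfl

private lemma dropLast_reverse' {α : Type*} (l : List α) :
    l.reverse.dropLast = l.tail.reverse := by
  have := List.tail_reverse (l := l.reverse)
  simpa using congrArg List.reverse this

private lemma tail_dropLast_reverse {α : Type*} (l : List α) :
    l.reverse.tail.dropLast = (l.tail.dropLast).reverse := by
  rw [List.tail_reverse, dropLast_reverse', tail_dropLast_comm]

theorem rvc_addVertex_le_succ {V : Type*} [Fintype V] (G : SimpleGraph V)
    (hG : G.Connected) (S : Set V) (hS : S.Nonempty) :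
    rvc (addVertex G S) ≤ rvc G + 1 := by
  classical
  obtain ⟨s, hsS⟩ := hS
  -- the defining set for `rvc G` is nonempty
  have hne : {k | ∃ c : V → ℕ, IsRainbowVCColoring G c k}.Nonempty := by
    obtain ⟨e⟩ := Fintype.truncEquivFin V
    refine ⟨Fintype.card V, fun v => (e v : ℕ), fun u v => ?_⟩
    obtain ⟨q⟩ := hG.preconnected u v
    refine ⟨q.toPath, q.toPath.2, ?_, fun x _ => (e x).isLt⟩
    have hnd : (q.toPath : G.Walk u v).support.Nodup := q.toPath.2.support_nodup
    exact ((hnd.sublist (List.tail_sublist _)).sublist (List.dropLast_sublist _)).map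
      (fun a b h => e.injective (Fin.val_injective h))
  obtain ⟨c, hc⟩ : rvc G ∈ {k | ∃ c : V → ℕ, IsRainbowVCColoring G c k} := Nat.sInf_mem hne
  set k₀ := rvc G with hk₀
  -- the new coloring
  set c' : Option V → ℕ := fun x => match x with
    | none => 0
    | some a => if a = s then k₀ else c a with hc'
  -- graph hom `some : G →g addVertex G S`
  have hadj : ∀ a b : V, G.Adj a b → (addVertex G S).Adj (some a) (some b) := by
    intro a b h
    exact ⟨by simpa using h.ne, Or.inl h⟩
  let f : G →g (addVertex G S) := ⟨some, fun h => hadj _ _ h⟩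
  have hsome : Function.Injective (some : V → Option V) := Option.some_injective V
  have hsadj : (addVertex G S).Adj none (some s) := ⟨by simp, Or.inl hsS⟩
  -- key lemma: recolored internal lists stay rainbow
  have key : ∀ (L : List V), L.Nodup → (L.map c).Nodup → (∀ x ∈ L, c x < k₀) →
      ((L.map (fun a => if a = s then k₀ else c a)).Nodup ∧
        ∀ x ∈ L, (if x = s then k₀ else c x) < k₀ + 1) := by
    intro L hL hnd hb
    constructor
    · refine hL.map_on ?_
      intro x hx y hy hxy
      by_cases hxs : x = s <;> by_cases hys : y = s <;> simp [hxs, hys] at hxy ⊢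
      · exact absurd hxy.symm (Nat.ne_of_lt (hb y hy))
      · exact absurd hxy (Nat.ne_of_lt (hb x hx))
      · exact List.inj_on_of_nodup_map hnd hx hy hxy
    · intro x hx
      by_cases hxs : x = s <;> simp [hxs]
      exact Nat.le_of_lt (hb x hx)
  apply Nat.sInf_le
  refine ⟨c', ?_⟩
  -- a rainbow walk from `none` to `some v`, for every `v`
  have main : ∀ v : V, ∃ q : (addVertex G S).Walk none (some v), q.IsPath ∧
      (q.support.tail.dropLast.map c').Nodup ∧
      ∀ x ∈ q.support.tail.dropLast, c' x < k₀ + 1 := by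
    intro v
    obtain ⟨p, hp, hnd, hb⟩ := hc s v
    refine ⟨Walk.cons hsadj (p.map f), ?_, ?_, ?_⟩
    · rw [Walk.cons_isPath_iff]
      refine ⟨Walk.map_isPath_of_injective hsome hp, ?_⟩
      simp [Walk.support_map]
    · -- internal list is `(p.support.dropLast).map some`
      have hsupp : (Walk.cons hsadj (p.map f)).support.tail.dropLast
          = (p.support.dropLast).map some := by
        simp only [Walk.support_cons, Walk.support_map, List.tail_cons, List.map_dropLast]
        rfl
      rw [hsupp, List.map_map]
      -- p.support.dropLast = s :: p.support.tail.dropLast  (or [])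
      have hsp : p.support = s :: p.support.tail := (Walk.support_eq_cons p) ▸ rfl
      have hnds : p.support.Nodup := hp.support_nodup
      rcases h0 : p.support.tail with _ | ⟨a, t⟩
      · rw [hsp, h0]
        simp
      · have hdl : p.support.dropLast = s :: p.support.tail.dropLast := by
          rw [hsp, h0]
          rfl
        rw [hdl]
        have hs_not : s ∉ p.support.tail.dropLast := by
          intro hmem
          have : s ∈ p.support.tail := (List.dropLast_sublist _).mem hmem
          rw [hsp] at hnds
          exact (List.nodup_cons.mp hnds).1 this
        have hLnd : p.support.tail.dropLast.Nodup :=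
          ((List.nodup_cons.mp (hsp ▸ hnds)).2).sublist (List.dropLast_sublist _)
        obtain ⟨hmnd, hmb⟩ := key _ hLnd hnd hb
        simp only [List.map_cons, List.nodup_cons]
        constructor
        · intro hmem
          simp only [hc'] at hmem
          simp only [List.mem_map] at hmem
          obtain ⟨x, hx, hxe⟩ := hmem
          have hxs : x ≠ s := fun h => hs_not (h ▸ hx)
          simp only [Function.comp] at hxe
          rw [if_neg hxs] at hxe
          simp at hxe
          have := hb x hx
          omega
        · have : (fun x => c' (some x)) = fun a => if a = s then k₀ else c a := rfl
          exact hmnd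
    · intro x hx
      have hsupp : (Walk.cons hsadj (p.map f)).support.tail.dropLast
          = (p.support.dropLast).map some := by
        simp only [Walk.support_cons, Walk.support_map, List.tail_cons, List.map_dropLast]
        rfl
      rw [hsupp, List.mem_map] at hx
      obtain ⟨a, ha, rfl⟩ := hx
      simp only [hc']
      by_cases has : a = s <;> simp [has]
      refine Nat.le_of_lt (hb a ?_)
      have hsp : p.support = s :: p.support.tail := (Walk.support_eq_cons p) ▸ rfl
      have hmem : a ∈ p.support.dropLast := ha
      rw [hsp] at hmem
      rcases h0 : p.support.tail with _ | ⟨b, t⟩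
      · rw [h0] at hmem; simp at hmem
      · rw [h0] at hmem
        rcases List.mem_cons.mp hmem with h | h
        · exact absurd h has
        · exact h
  intro u v
  match u, v with
  | none, none => exact ⟨Walk.nil, by simp, by simp, by simp⟩
  | none, some v => exact main v
  | some u, none =>
    obtain ⟨q, hq, hnd, hb⟩ := main u
    refine ⟨q.reverse, hq.reverse, ?_, ?_⟩
    · rw [Walk.support_reverse, tail_dropLast_reverse, List.map_reverse, List.nodup_reverse]
      exact hnd
    · intro x hx
      rw [Walk.support_reverse, tail_dropLast_reverse, List.mem_reverse] at hx
      exact hb x hx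
  | some u, some v =>
    obtain ⟨p, hp, hnd, hb⟩ := hc u v
    refine ⟨p.map f, Walk.map_isPath_of_injective hsome hp, ?_, ?_⟩
    · rw [Walk.support_map]
      show (((p.support.map some).tail.dropLast).map c').Nodup
      rw [← List.map_tail, ← List.map_dropLast, List.map_map]
      have hL : p.support.tail.dropLast.Nodup :=
        (hp.support_nodup.sublist (List.tail_sublist _)).sublist (List.dropLast_sublist _)
      have : (c' ∘ some) = fun a => if a = s then k₀ else c a := rfl
      rw [this]
      exact (key _ hL hnd hb).1
    · intro x hx
      rw [Walk.support_map, ← List.map_tail, ← List.map_dropLast, List.mem_map] at hx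
      obtain ⟨a, ha, rfl⟩ := hx
      exact (key _ ((hp.support_nodup.sublist (List.tail_sublist _)).sublist
        (List.dropLast_sublist _)) hnd hb).2 a ha
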